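/- Let f, g : ℝ → ℝ be even functions with ∫_ℝ |f(x)|(x² ∨ 1) dx < ∞ and ∫_ℝ |g(x)|(x² ∨ 1) dx < ∞, and suppose ∫_ℝ f(x) dx ≠ 0. Then for every σ > 0 and every h ∈ ℝ, | σ² E[g(h + σZ)] − ((∫g)/(∫f)) · σ² E[f(h + σZ)] | ≤ (1/(2√(2π) σ)) · ( (∫_ℝ y²|f(y)|dy / |∫_ℝ f(y)dy|) · ∫_ℝ |g(y)| dy + ∫_ℝ y²|g(y)| dy ). -/

import Mathlib

open MeasureTheory Filter

/-- Standard Gaussian density. -/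
noncomputable def stdGauss (z : ℝ) : ℝ := Real.exp (-z ^ 2 / 2) / Real.sqrt (2 * Real.pi)

lemma sqrt2pi_pos : 0 < Real.sqrt (2 * Real.pi) :=
  Real.sqrt_pos.2 (by positivity)

lemma stdGauss_pos (z : ℝ) : 0 < stdGauss z := by
  unfold stdGauss; positivity

lemma stdGauss_le (z : ℝ) : stdGauss z ≤ 1 / Real.sqrt (2 * Real.pi) := by
  unfold stdGauss
  have he : Real.exp (-z ^ 2 / 2) ≤ 1 := Real.exp_le_one_iff.2 (by nlinarith)
  exact (div_le_div_iff_of_pos_right sqrt2pi_pos).2 he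

lemma stdGauss_even (z : ℝ) : stdGauss (-z) = stdGauss z := by
  unfold stdGauss; ring_nf

lemma hasDerivAt_stdGauss (z : ℝ) : HasDerivAt stdGauss (-z * stdGauss z) z := by
  have h1 : HasDerivAt (fun z : ℝ => -z ^ 2 / 2) (-z) z := by
    have := ((hasDerivAt_pow 2 z).neg).div_const 2
    simpa using this.congr_deriv (by ring)
  have h2 := (h1.exp).div_const (Real.sqrt (2 * Real.pi))
  unfold stdGauss
  refine h2.congr_deriv ?_
  ring

lemma hasDerivAt_stdGauss' (z : ℝ) :
    HasDerivAt (fun z => -z * stdGauss z) ((z ^ 2 - 1) * stdGauss z) z := by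
  have := (hasDerivAt_id z).neg.mul (hasDerivAt_stdGauss z)
  refine this.congr_deriv ?_
  simp only [Pi.neg_apply, id]
  ring

lemma abs_snd_deriv_le (z : ℝ) : |(z ^ 2 - 1) * stdGauss z| ≤ 1 / Real.sqrt (2 * Real.pi) := by
  have h1 : |z ^ 2 - 1| * Real.exp (-z ^ 2 / 2) ≤ 1 := by
    rcases le_or_gt (z ^ 2) 1 with hz | hz
    · have : Real.exp (-z ^ 2 / 2) ≤ 1 := Real.exp_le_one_iff.2 (by nlinarith)
      have h2 : |z ^ 2 - 1| ≤ 1 := by rw [abs_le]; constructor <;> nlinarith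
      nlinarith [Real.exp_pos (-z^2/2), abs_nonneg (z^2-1)]
    · have h2 : |z ^ 2 - 1| = z ^ 2 - 1 := abs_of_pos (by nlinarith)
      have h3 : Real.exp (z ^ 2 / 4) ≥ 1 + z ^ 2 / 4 := by nlinarith [Real.add_one_le_exp (z ^ 2 / 4)]
      have h4 : Real.exp (-z ^ 2 / 2) = (Real.exp (z ^ 2 / 4))⁻¹ ^ 2 := by
        rw [← Real.exp_neg, ← Real.exp_nat_mul]; ring_nf
      have h5 : (z ^ 2 - 1) ≤ (1 + z ^ 2 / 4) ^ 2 := by nlinarith [sq_nonneg (z ^ 2 - 4)]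
      have h6 : (Real.exp (z^2/4)) > 0 := Real.exp_pos _
      rw [h2, h4]
      rw [inv_pow, ← div_eq_mul_inv, div_le_one (by positivity)]
      calc z ^ 2 - 1 ≤ (1 + z ^ 2 / 4) ^ 2 := h5
        _ ≤ Real.exp (z ^ 2 / 4) ^ 2 := by nlinarith
  unfold stdGauss
  rw [abs_mul, abs_div, abs_of_nonneg (Real.exp_pos _).le,
    abs_of_nonneg sqrt2pi_pos.le, ← mul_div_assoc, div_le_div_iff₀ sqrt2pi_pos sqrt2pi_pos]
  nlinarith [sqrt2pi_pos, h1]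

lemma lip_phi' (x y : ℝ) :
    |(-x * stdGauss x) - (-y * stdGauss y)| ≤ 1 / Real.sqrt (2 * Real.pi) * |x - y| := by
  have := Convex.norm_image_sub_le_of_norm_hasDerivWithin_le
    (f := fun z => -z * stdGauss z) (f' := fun z => (z ^ 2 - 1) * stdGauss z)
    (s := Set.univ) (C := 1 / Real.sqrt (2 * Real.pi))
    (fun z _ => (hasDerivAt_stdGauss' z).hasDerivWithinAt)
    (fun z _ => by rw [Real.norm_eq_abs]; exact abs_snd_deriv_le z) convex_univ (Set.mem_univ y) (Set.mem_univ x)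
  simpa [Real.norm_eq_abs] using this

lemma quad_bound_aux {C : ℝ} (hC : 0 ≤ C) (ρ ρ' : ℝ → ℝ)
    (hd : ∀ s, HasDerivAt ρ (ρ' s) s) (hb : ∀ s, |ρ' s| ≤ 2 * C * |s|)
    {t : ℝ} (ht : 0 ≤ t) : ρ t - ρ 0 ≤ C * t ^ 2 := by
  have hu : ∀ s : ℝ, HasDerivAt (fun s => C * s ^ 2 - ρ s) (2 * C * s - ρ' s) s := by
    intro s
    have := ((hasDerivAt_pow 2 s).const_mul C).sub (hd s)
    refine this.congr_deriv ?_
    simp; ring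
  have mono : MonotoneOn (fun s => C * s ^ 2 - ρ s) (Set.Ici (0:ℝ)) := by
    apply monotoneOn_of_deriv_nonneg (convex_Ici 0)
    · exact (Differentiable.continuous (fun s => (hu s).differentiableAt)).continuousOn
    · exact fun s _ => ((hu s).differentiableAt).differentiableWithinAt
    · intro s hs
      rw [interior_Ici] at hs
      rw [(hu s).deriv]
      have := abs_le.1 (hb s)
      rw [abs_of_pos hs] at this
      linarith [this.2]
  have h0 : (0:ℝ) ∈ Set.Ici (0:ℝ) := Set.self_mem_Ici
  have := mono h0 (Set.mem_Ici.2 ht) ht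
  simp only at this
  nlinarith [this]

lemma quad_bound {C : ℝ} (hC : 0 ≤ C) (ρ ρ' : ℝ → ℝ)
    (hd : ∀ s, HasDerivAt ρ (ρ' s) s) (hb : ∀ s, |ρ' s| ≤ 2 * C * |s|)
    (t : ℝ) : |ρ t - ρ 0| ≤ C * t ^ 2 := by
  rcases le_or_gt 0 t with ht | ht
  · rw [abs_le]
    constructor
    · have := quad_bound_aux hC (fun s => -ρ s) (fun s => -ρ' s)
        (fun s => (hd s).neg) (fun s => by simpa using hb s) ht
      linarith
    · exact quad_bound_aux hC ρ ρ' hd hb ht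
  · have hd' : ∀ s, HasDerivAt (fun s => ρ (-s)) (-ρ' (-s)) s := by
      intro s
      have := (hd (-s)).comp s (hasDerivAt_neg s)
      simpa [mul_comm, Function.comp_def] using this
    have hb' : ∀ s, |-ρ' (-s)| ≤ 2 * C * |s| := by
      intro s; simpa [abs_neg] using hb (-s)
    have ht' : (0:ℝ) ≤ -t := by linarith
    have h1 := quad_bound_aux hC (fun s => ρ (-s)) (fun s => -ρ' (-s)) hd' hb' ht'
    have h2 := quad_bound_aux hC (fun s => -ρ (-s)) (fun s => ρ' (-s))
      (fun s => by simpa using (hd' s).fun_neg) (fun s => by simpa using hb' s) ht'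
    simp only [neg_neg, neg_zero] at h1 h2
    rw [abs_le]
    constructor <;> nlinarith

lemma key_gauss (a t : ℝ) :
    |stdGauss (a + t) + stdGauss (a - t) - 2 * stdGauss a| ≤ t ^ 2 / Real.sqrt (2 * Real.pi) := by
  set C := 1 / Real.sqrt (2 * Real.pi) with hCdef
  have hC : 0 ≤ C := by positivity
  set ψ : ℝ → ℝ := fun s => stdGauss (a + s) + stdGauss (a - s) with hψdef
  have hd : ∀ s, HasDerivAt ψ
      ((-(a + s) * stdGauss (a + s)) - (-(a - s) * stdGauss (a - s))) s := by
    intro s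
    have h1 : HasDerivAt (fun s : ℝ => stdGauss (a + s)) (-(a + s) * stdGauss (a + s)) s := by
      have := (hasDerivAt_stdGauss (a + s)).comp s ((hasDerivAt_id s).const_add a)
      simpa [Function.comp_def] using this
    have h2 : HasDerivAt (fun s : ℝ => stdGauss (a - s)) (-(-(a - s) * stdGauss (a - s))) s := by
      have := (hasDerivAt_stdGauss (a - s)).comp s ((hasDerivAt_id s).const_sub a)
      simpa [mul_comm, Function.comp_def] using this
    have := h1.add h2
    refine this.congr_deriv ?_; ring
  have hb : ∀ s, |(-(a + s) * stdGauss (a + s)) - (-(a - s) * stdGauss (a - s))| ≤ 2 * C * |s| := by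
    intro s
    have := lip_phi' (a + s) (a - s)
    have h2 : |(a + s) - (a - s)| = 2 * |s| := by
      rw [show (a + s) - (a - s) = 2 * s by ring, abs_mul]
      norm_num
    rw [h2] at this
    calc _ ≤ C * (2 * |s|) := this
      _ = 2 * C * |s| := by ring
  have := quad_bound hC ψ _ hd hb t
  have hψ0 : ψ 0 = 2 * stdGauss a := by
    simp only [hψdef, add_zero, sub_zero]
    ring
  rw [hψ0] at this
  calc |stdGauss (a + t) + stdGauss (a - t) - 2 * stdGauss a| ≤ C * t ^ 2 := this
    _ = t ^ 2 / Real.sqrt (2 * Real.pi) := by rw [hCdef]; ring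

lemma stdGauss_continuous : Continuous stdGauss := by
  unfold stdGauss
  fun_prop

lemma aesm_of_weight {f : ℝ → ℝ} (hfint : Integrable (fun x => f x * (x ^ 2 ⊔ 1))) :
    AEStronglyMeasurable f (volume : Measure ℝ) := by
  have h1 : Continuous fun x : ℝ => (x ^ 2 ⊔ 1)⁻¹ :=
    ((continuous_pow 2).sup continuous_const).inv₀ (fun x => by positivity)
  have h2 := hfint.aestronglyMeasurable.mul h1.aestronglyMeasurable
  refine h2.congr (Filter.Eventually.of_forall fun x => ?_)
  have hx : (x ^ 2 ⊔ 1 : ℝ) ≠ 0 := by positivity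
  simp only [Pi.mul_apply]
  field_simp

lemma integrable_of_weight {f : ℝ → ℝ} (hfint : Integrable (fun x => f x * (x ^ 2 ⊔ 1))) :
    Integrable f := by
  refine hfint.mono (aesm_of_weight hfint) (Filter.Eventually.of_forall fun x => ?_)
  simp only [Real.norm_eq_abs, abs_mul]
  nlinarith [abs_nonneg (f x), abs_nonneg (x ^ 2 ⊔ 1), le_sup_right (a := x ^ 2) (b := (1:ℝ)),
    abs_of_nonneg (show (0:ℝ) ≤ x ^ 2 ⊔ 1 by positivity)]

lemma integrable_sq_of_weight {f : ℝ → ℝ} (hfint : Integrable (fun x => f x * (x ^ 2 ⊔ 1))) :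
    Integrable (fun x => x ^ 2 * |f x|) := by
  refine hfint.mono ?_ (Filter.Eventually.of_forall fun x => ?_)
  · exact (continuous_pow 2).aestronglyMeasurable.mul (aesm_of_weight hfint).norm
      |>.congr (Filter.Eventually.of_forall fun x => by simp [Real.norm_eq_abs])
  · simp only [Real.norm_eq_abs, abs_mul]
    have h1 : |x ^ 2| = x ^ 2 := abs_of_nonneg (by positivity)
    have h2 : |x ^ 2 ⊔ 1| = x ^ 2 ⊔ 1 := abs_of_nonneg (by positivity)
    rw [h1, h2, abs_abs]
    nlinarith [abs_nonneg (f x), le_sup_left (a := x ^ 2) (b := (1:ℝ))]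

/-- Gaussian expectation `E[f(h + σ Z)]` for a standard Gaussian `Z`. -/
noncomputable def gexp (f : ℝ → ℝ) (σ h : ℝ) : ℝ := ∫ z, f (h + σ * z) * stdGauss z

lemma integrable_mul_gauss {f : ℝ → ℝ} (hfi : Integrable f)
    (hfm : AEStronglyMeasurable f (volume : Measure ℝ)) (c d : ℝ) :
    Integrable (fun y => f y * stdGauss ((y + c) / d)) := by
  have : Integrable (fun y => stdGauss ((y + c) / d) * f y) := by
    refine hfi.bdd_mul (c := 1 / Real.sqrt (2 * Real.pi)) ?_ (Filter.Eventually.of_forall fun y => ?_)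
    · exact (stdGauss_continuous.comp ((continuous_id.add continuous_const).div_const d))
        |>.aestronglyMeasurable
    · rw [Real.norm_eq_abs, abs_of_pos (stdGauss_pos _)]
      exact stdGauss_le _
  exact this.congr (Filter.Eventually.of_forall fun y => mul_comm _ _)

lemma transform {f : ℝ → ℝ} (hfe : ∀ x, f (-x) = f x) (hfi : Integrable f)
    (hfm : AEStronglyMeasurable f (volume : Measure ℝ)) {σ : ℝ} (h : ℝ) (hσ : 0 < σ) :
    σ ^ 2 * gexp f σ h
      = ∫ y, f y * (σ * (stdGauss ((y + -h) / σ) + stdGauss ((y + h) / σ)) / 2) := by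
  have hσ' : σ ≠ 0 := hσ.ne'
  set G : ℝ → ℝ := fun y => f y * stdGauss ((y + -h) / σ) with hGdef
  have hGi : Integrable G := integrable_mul_gauss hfi hfm (-h) σ
  have step1 : gexp f σ h = ∫ z, G (h + σ * z) := by
    unfold gexp
    congr 1
    ext z
    rw [hGdef]
    congr 2
    field_simp
    ring
  have step2 : (∫ z, G (h + σ * z)) = σ⁻¹ * ∫ y, G y := by
    calc (∫ z, G (h + σ * z)) = ∫ z, (fun x => G (h + x)) (σ * z) := rfl
      _ = |σ⁻¹| • ∫ x, G (h + x) := by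
          simpa using MeasureTheory.Measure.integral_comp_mul_left (fun x => G (h + x)) σ
      _ = σ⁻¹ * ∫ x, G x := by
          rw [MeasureTheory.integral_add_left_eq_self, abs_of_pos (by positivity), smul_eq_mul]
  have step3 : (∫ y, f y * stdGauss ((y + h) / σ)) = ∫ y, G y := by
    rw [← MeasureTheory.integral_neg_eq_self G volume]
    congr 1
    ext y
    rw [hGdef]
    simp only
    rw [hfe, show (-y + -h) / σ = -((y + h) / σ) by ring, stdGauss_even]
  have hGi' : Integrable (fun y => f y * stdGauss ((y + h) / σ)) := integrable_mul_gauss hfi hfm h σ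
  have step4 : (∫ y, f y * (σ * (stdGauss ((y + -h) / σ) + stdGauss ((y + h) / σ)) / 2))
      = (σ / 2) * ((∫ y, G y) + ∫ y, f y * stdGauss ((y + h) / σ)) := by
    rw [← integral_add hGi hGi', ← integral_const_mul]
    congr 1
    ext y
    rw [hGdef]
    ring
  rw [step1, step2, step4, step3]
  field_simp
  ring

theorem stmt_3 (f g : ℝ → ℝ) (hfe : ∀ x, f (-x) = f x) (hge : ∀ x, g (-x) = g x)
    (hfint : Integrable (fun x => f x * (x ^ 2 ⊔ 1)))
    (hgint : Integrable (fun x => g x * (x ^ 2 ⊔ 1)))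
    (hf0 : (∫ x, f x) ≠ 0)
    (σ : ℝ) (hσ : 0 < σ) (h : ℝ) :
    |σ ^ 2 * gexp g σ h - ((∫ x, g x) / ∫ x, f x) * (σ ^ 2 * gexp f σ h)|
      ≤ 1 / (2 * Real.sqrt (2 * Real.pi) * σ) *
          ((∫ y, y ^ 2 * |f y|) / |∫ y, f y| * (∫ y, |g y|) + ∫ y, y ^ 2 * |g y|) := by
  have hSq : 0 < Real.sqrt (2 * Real.pi) := sqrt2pi_pos
  set Sq := Real.sqrt (2 * Real.pi) with hSqdef
  have hfm := aesm_of_weight hfint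
  have hgm := aesm_of_weight hgint
  have hfi := integrable_of_weight hfint
  have hgi := integrable_of_weight hgint
  have hfsq := integrable_sq_of_weight hfint
  have hgsq := integrable_sq_of_weight hgint
  set K : ℝ → ℝ := fun y => σ * (stdGauss ((y + -h) / σ) + stdGauss ((y + h) / σ)) / 2
    with hKdef
  have htf : σ ^ 2 * gexp f σ h = ∫ y, f y * K y := transform hfe hfi hfm h hσ
  have htg : σ ^ 2 * gexp g σ h = ∫ y, g y * K y := transform hge hgi hgm h hσ
  set c : ℝ := σ * stdGauss (h / σ) with hcdef
  have hKcont : Continuous K := by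
    apply Continuous.div_const
    apply continuous_const.mul
    exact (stdGauss_continuous.comp ((continuous_id.add continuous_const).div_const σ)).add
      (stdGauss_continuous.comp ((continuous_id.add continuous_const).div_const σ))
  have hKc : ∀ y, |K y - c| ≤ y ^ 2 / (2 * σ * Sq) := by
    intro y
    have hk := key_gauss (h / σ) (y / σ)
    have e1 : (y + -h) / σ = -(h / σ - y / σ) := by ring
    have e2 : (y + h) / σ = h / σ + y / σ := by field_simp; ring
    have e3 : K y - c = σ / 2 *
        (stdGauss (h / σ + y / σ) + stdGauss (h / σ - y / σ) - 2 * stdGauss (h / σ)) := by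
      rw [hKdef, hcdef]
      simp only [e1, e2, stdGauss_even]
      ring
    rw [e3, abs_mul, abs_of_pos (by positivity : (0:ℝ) < σ / 2)]
    calc σ / 2 * |stdGauss (h / σ + y / σ) + stdGauss (h / σ - y / σ) - 2 * stdGauss (h / σ)|
        ≤ σ / 2 * ((y / σ) ^ 2 / Sq) := by
          exact mul_le_mul_of_nonneg_left hk (by positivity)
      _ = y ^ 2 / (2 * σ * Sq) := by field_simp
  have hKbd : ∀ y, |K y - c| ≤ σ / Sq + |c| := by
    intro y
    have h1 : |K y| ≤ σ / Sq := by
      have hp1 := (stdGauss_pos ((y + -h) / σ)).le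
      have hp2 := (stdGauss_pos ((y + h) / σ)).le
      have ha := (le_div_iff₀ hSq).1 (stdGauss_le ((y + -h) / σ))
      have hb := (le_div_iff₀ hSq).1 (stdGauss_le ((y + h) / σ))
      rw [hKdef, abs_of_nonneg (by nlinarith : (0:ℝ) ≤ σ * (stdGauss ((y + -h) / σ) + stdGauss ((y + h) / σ)) / 2)]
      rw [div_le_div_iff₀ (by norm_num) hSq]
      nlinarith [mul_le_mul_of_nonneg_left ha hσ.le, mul_le_mul_of_nonneg_left hb hσ.le]
    calc |K y - c| ≤ |K y| + |c| := abs_sub _ _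
      _ ≤ σ / Sq + |c| := by linarith
  have hint_mul : ∀ (u : ℝ → ℝ), Integrable u → AEStronglyMeasurable u (volume : Measure ℝ) →
      Integrable (fun y => u y * (K y - c)) := by
    intro u hui hum
    have : Integrable (fun y => (K y - c) * u y) := by
      refine hui.bdd_mul (c := σ / Sq + |c|) ((hKcont.sub continuous_const).aestronglyMeasurable)
        (Filter.Eventually.of_forall fun y => ?_)
      rw [Real.norm_eq_abs]; exact hKbd y
    exact this.congr (Filter.Eventually.of_forall fun y => mul_comm _ _)
  have hfKc := hint_mul f hfi hfm
  have hgKc := hint_mul g hgi hgm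
  have hsplit : ∀ (u : ℝ → ℝ), Integrable u → Integrable (fun y => u y * (K y - c)) →
      (∫ y, u y * K y) = (∫ y, u y * (K y - c)) + c * ∫ x, u x := by
    intro u hui huKc
    rw [← integral_const_mul c, ← integral_add huKc (hui.const_mul c)]
    congr 1
    ext y
    ring
  rw [htf, htg, hsplit f hfi hfKc, hsplit g hgi hgKc]
  set F := ∫ x, f x
  set G := ∫ x, g x
  set Ef := ∫ y, f y * (K y - c) with hEfdef
  set Eg := ∫ y, g y * (K y - c) with hEgdef
  have hFabs : 0 < |F| := abs_pos.2 hf0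
  have key_eq : Eg + c * G - G / F * (Ef + c * F) = Eg - G / F * Ef := by
    field_simp
    ring
  rw [key_eq]
  -- bounds on Ef, Eg
  have hEbound : ∀ (u : ℝ → ℝ), Integrable (fun x => u x * (x ^ 2 ⊔ 1)) →
      Integrable (fun y => u y * (K y - c)) → Integrable (fun x => x ^ 2 * |u x|) →
      |∫ y, u y * (K y - c)| ≤ (1 / (2 * σ * Sq)) * ∫ y, y ^ 2 * |u y| := by
    intro u huw huKc husq
    calc |∫ y, u y * (K y - c)| ≤ ∫ y, |u y * (K y - c)| := by
          have := norm_integral_le_integral_norm (μ := volume) (fun y => u y * (K y - c))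
          simp only [Real.norm_eq_abs] at this
          exact this
      _ ≤ ∫ y, (1 / (2 * σ * Sq)) * (y ^ 2 * |u y|) := by
          refine integral_mono huKc.abs (husq.const_mul _) fun y => ?_
          rw [abs_mul]
          have h1 := hKc y
          have h2 : |u y| * |K y - c| ≤ |u y| * (y ^ 2 / (2 * σ * Sq)) :=
            mul_le_mul_of_nonneg_left h1 (abs_nonneg _)
          calc |u y| * |K y - c| ≤ |u y| * (y ^ 2 / (2 * σ * Sq)) := h2
            _ = 1 / (2 * σ * Sq) * (y ^ 2 * |u y|) := by ring
      _ = (1 / (2 * σ * Sq)) * ∫ y, y ^ 2 * |u y| := integral_const_mul _ _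
  have hEf := hEbound f hfint hfKc hfsq
  have hEg := hEbound g hgint hgKc hgsq
  have hGle : |G| ≤ ∫ y, |g y| := by
    simpa [Real.norm_eq_abs] using norm_integral_le_integral_norm g
  have hMf : 0 ≤ ∫ y, y ^ 2 * |f y| := integral_nonneg fun y => by positivity
  have hMg : 0 ≤ ∫ y, y ^ 2 * |g y| := integral_nonneg fun y => by positivity
  have hg1 : 0 ≤ ∫ y, |g y| := integral_nonneg fun y => abs_nonneg _
  calc |Eg - G / F * Ef| ≤ |Eg| + |G / F| * |Ef| := by
        rw [← abs_mul]; exact abs_sub _ _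
    _ ≤ (1 / (2 * σ * Sq)) * (∫ y, y ^ 2 * |g y|)
        + (∫ y, |g y|) / |F| * ((1 / (2 * σ * Sq)) * ∫ y, y ^ 2 * |f y|) := by
        have h1 : |G / F| * |Ef| ≤ (∫ y, |g y|) / |F| * ((1 / (2 * σ * Sq)) * ∫ y, y ^ 2 * |f y|) := by
          rw [abs_div]
          gcongr
        linarith
    _ = 1 / (2 * Sq * σ) * ((∫ y, y ^ 2 * |f y|) / |F| * (∫ y, |g y|) + ∫ y, y ^ 2 * |g y|) := by
        field_simp
        ring
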